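/- If P = ∅, then there exists k* ∈ ℕ such that Q^{k*} ≠ ∅ and Q^{k*+1} = ∅; in particular the intersection over all k ∈ ℕ of the sets Qᵏ is empty. -/

import Mathlib

open Classical in
/-- The decreasing sequence of sets `Qᵏ`: `Q⁰ = [0,1]` and
`Q^{k+1} = {q ∈ Qᵏ : (1−δ)·u*(q) + δ·Uᵏ(q) ≥ m(q)}`, where `Uᵏ` is the chord of `m`
from `(inf Qᵏ, m(inf Qᵏ))` to `(1, m(1))` (constant `m(1)` if `inf Qᵏ = 1`). -/
noncomputable def Qseq (m ustar : ℝ → ℝ) (δ : ℝ) : ℕ → Set ℝ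
  | 0 => Set.Icc 0 1
  | k + 1 =>
      if Qseq m ustar δ k = ∅ then (∅ : Set ℝ)
      else
        {q ∈ Qseq m ustar δ k |
          (1 - δ) * ustar q +
            δ * (if sInf (Qseq m ustar δ k) < 1 then
                ((1 - q) * m (sInf (Qseq m ustar δ k))
                  + (q - sInf (Qseq m ustar δ k)) * m 1) / (1 - sInf (Qseq m ustar δ k))
              else m 1)
          ≥ m q}

/-- Auxiliary: the sublevel set of a continuous-on function inside a closed set is closed. -/
lemma closed_sep_aux {s : Set ℝ} (hs : IsClosed s) (f : ℝ → ℝ) (hf : ContinuousOn f s) :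
    IsClosed {q ∈ s | f q ≤ 0} := by
  have h : {q ∈ s | f q ≤ 0} = s ∩ f ⁻¹' Set.Iic 0 := rfl
  rw [h]
  exact hf.preimage_isClosed_of_isClosed hs isClosed_Iic

/-- if `P = ∅` then the sequence `Qᵏ` becomes empty in finitely many
steps, and in particular `⋂ₖ Qᵏ = ∅`. -/
theorem Qseq_empty_in_finite_time_of_P_empty
    (m ustar : ℝ → ℝ) (δ : ℝ) (hδ : δ ∈ Set.Ioo (0 : ℝ) 1)
    (hconv : ConvexOn ℝ (Set.Icc (0 : ℝ) 1) m)
    (hcont : ContinuousOn m (Set.Icc (0 : ℝ) 1))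
    (haff : ∀ x y t : ℝ, ustar ((1 - t) * x + t * y) = (1 - t) * ustar x + t * ustar y)
    (hle : ∀ p ∈ Set.Icc (0 : ℝ) 1, ustar p ≤ m p)
    (hP : {p ∈ Set.Icc (0 : ℝ) 1 | m p = ustar p} = ∅) :
    (∃ k : ℕ, (Qseq m ustar δ k).Nonempty ∧ Qseq m ustar δ (k + 1) = ∅) ∧
    (⋂ k : ℕ, Qseq m ustar δ k) = ∅ := by
  classical
  obtain ⟨hδ0, hδ1⟩ := hδ
  have hδ1' : (0:ℝ) < 1 - δ := by linarith
  -- ustar is affine, hence continuous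
  have hua : ∀ q : ℝ, ustar q = (1 - q) * ustar 0 + q * ustar 1 := by
    intro q; have h := haff 0 1 q; simpa using h
  have hcu : Continuous ustar := by
    have h : ustar = fun q => (1 - q) * ustar 0 + q * ustar 1 := funext hua
    rw [h]; fun_prop
  -- the minimum gap ε between m and ustar on [0,1]
  obtain ⟨p0, hp0, hmin⟩ := isCompact_Icc.exists_isMinOn
    (⟨0, by norm_num⟩ : (Set.Icc (0:ℝ) 1).Nonempty) (hcont.sub hcu.continuousOn)
  set ε : ℝ := m p0 - ustar p0 with hεdef
  have hεpos : 0 < ε := by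
    have h1 : ustar p0 ≤ m p0 := hle p0 hp0
    have h2 : m p0 ≠ ustar p0 := by
      intro h
      have hm : p0 ∈ {p ∈ Set.Icc (0:ℝ) 1 | m p = ustar p} := ⟨hp0, h⟩
      rw [hP] at hm
      exact hm
    have := lt_of_le_of_ne h1 (Ne.symm h2)
    rw [hεdef]; linarith
  have hεle : ∀ p ∈ Set.Icc (0:ℝ) 1, ustar p ≤ m p - ε := by
    intro p hp
    have h : m p0 - ustar p0 ≤ m p - ustar p := isMinOn_iff.mp hmin p hp
    have h2 : ε = m p0 - ustar p0 := hεdef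
    linarith
  set c : ℝ := (1 - δ) * ε / δ with hcdef
  have hcpos : 0 < c := div_pos (mul_pos hδ1' hεpos) hδ0
  -- basic facts about Qseq
  have hstep : ∀ k, (Qseq m ustar δ k).Nonempty →
      Qseq m ustar δ (k+1) = {q ∈ Qseq m ustar δ k |
        (1 - δ) * ustar q +
          δ * (if sInf (Qseq m ustar δ k) < 1 then
              ((1 - q) * m (sInf (Qseq m ustar δ k))
                + (q - sInf (Qseq m ustar δ k)) * m 1) / (1 - sInf (Qseq m ustar δ k))
            else m 1)
        ≥ m q} := by
    intro k hk
    rw [Qseq, if_neg (Set.nonempty_iff_ne_empty.mp hk)]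
  have hmonoQ : ∀ k, Qseq m ustar δ (k+1) ⊆ Qseq m ustar δ k := by
    intro k q hq
    by_cases hk : Qseq m ustar δ k = ∅
    · rw [Qseq, if_pos hk] at hq; exact absurd hq (Set.notMem_empty q)
    · rw [Qseq, if_neg hk] at hq; exact hq.1
  have hsubI : ∀ k, Qseq m ustar δ k ⊆ Set.Icc 0 1 := by
    intro k; induction k with
    | zero => exact subset_rfl
    | succ k ih => exact (hmonoQ k).trans ih
  have hbdd : ∀ k, BddBelow (Qseq m ustar δ k) :=
    fun k => BddBelow.mono (hsubI k) bddBelow_Icc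
  have hclosed : ∀ k, IsClosed (Qseq m ustar δ k) := by
    intro k; induction k with
    | zero => exact isClosed_Icc
    | succ k ih =>
      by_cases hk : Qseq m ustar δ k = ∅
      · rw [Qseq, if_pos hk]; exact isClosed_empty
      · rw [Qseq, if_neg hk]
        have hCC : Continuous (fun q : ℝ => (if sInf (Qseq m ustar δ k) < 1 then
            ((1 - q) * m (sInf (Qseq m ustar δ k))
              + (q - sInf (Qseq m ustar δ k)) * m 1) / (1 - sInf (Qseq m ustar δ k))
            else m 1)) := by
          by_cases h1 : sInf (Qseq m ustar δ k) < 1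
          · simp only [if_pos h1]
            exact Continuous.div_const (by fun_prop) _
          · simp only [if_neg h1]; exact continuous_const
        have hf : ContinuousOn (fun q => m q - ((1 - δ) * ustar q +
            δ * (if sInf (Qseq m ustar δ k) < 1 then
              ((1 - q) * m (sInf (Qseq m ustar δ k))
                + (q - sInf (Qseq m ustar δ k)) * m 1) / (1 - sInf (Qseq m ustar δ k))
              else m 1))) (Qseq m ustar δ k) :=
          (hcont.mono (hsubI k)).sub
            (((continuous_const.mul hcu).add (continuous_const.mul hCC)).continuousOn)
        have hrw : {q ∈ Qseq m ustar δ k |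
            (1 - δ) * ustar q +
              δ * (if sInf (Qseq m ustar δ k) < 1 then
                  ((1 - q) * m (sInf (Qseq m ustar δ k))
                    + (q - sInf (Qseq m ustar δ k)) * m 1) / (1 - sInf (Qseq m ustar δ k))
                else m 1) ≥ m q}
            = {q ∈ Qseq m ustar δ k | (fun q => m q - ((1 - δ) * ustar q +
              δ * (if sInf (Qseq m ustar δ k) < 1 then
                ((1 - q) * m (sInf (Qseq m ustar δ k))
                  + (q - sInf (Qseq m ustar δ k)) * m 1) / (1 - sInf (Qseq m ustar δ k))
                else m 1))) q ≤ 0} := by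
          ext q
          simp only [Set.mem_setOf_eq]
          constructor
          · rintro ⟨h1, h2⟩; exact ⟨h1, by linarith⟩
          · rintro ⟨h1, h2⟩; exact ⟨h1, by linarith⟩
        rw [hrw]
        exact closed_sep_aux ih _ hf
  -- the sequence becomes empty in finite time
  have hstop : ∃ k, Qseq m ustar δ k = ∅ := by
    by_contra hall
    push_neg at hall
    have hne : ∀ k, (Qseq m ustar δ k).Nonempty := hall
    obtain ⟨a, ha⟩ : ∃ a : ℕ → ℝ, ∀ k, a k = sInf (Qseq m ustar δ k) :=
      ⟨fun k => sInf (Qseq m ustar δ k), fun _ => rfl⟩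
    have hamem : ∀ k, a k ∈ Qseq m ustar δ k := by
      intro k; rw [ha k]; exact (hclosed k).csInf_mem (hne k) (hbdd k)
    have haI : ∀ k, a k ∈ Set.Icc (0:ℝ) 1 := fun k => hsubI k (hamem k)
    have hamono : Monotone a := by
      apply monotone_nat_of_le_succ
      intro k
      rw [ha k, ha (k+1)]
      exact csInf_le_csInf (hbdd k) (hne (k+1)) (hmonoQ k)
    -- inf < 1 at every stage
    have halt : ∀ k, a k < 1 := by
      intro k
      rcases lt_or_eq_of_le (haI k).2 with h | h
      · exact h
      · exfalso
        obtain ⟨q, hq⟩ := hne (k+1)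
        rw [hstep k (hne k)] at hq
        obtain ⟨hqk, hcond⟩ := hq
        have hq1 : q = 1 := by
          have h1 : a k ≤ q := by rw [ha k]; exact csInf_le (hbdd k) hqk
          have h2 : q ≤ 1 := (hsubI k hqk).2
          linarith
        have hnot : ¬ sInf (Qseq m ustar δ k) < 1 := by
          rw [← ha k, h]; exact lt_irrefl 1
        rw [if_neg hnot, hq1] at hcond
        have hu := hεle 1 (by norm_num)
        nlinarith [mul_pos hδ1' hεpos]
    -- the key inequality from membership of the infimum
    have hkey : ∀ k, m (a (k+1)) + c ≤
        ((1 - a (k+1)) * m (a k) + (a (k+1) - a k) * m 1) / (1 - a k) := by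
      intro k
      have hm := hamem (k+1)
      rw [hstep k (hne k)] at hm
      obtain ⟨hqk, hcond⟩ := hm
      rw [← ha k] at hcond
      rw [if_pos (halt k)] at hcond
      have hu := hεle (a (k+1)) (haI (k+1))
      have h2 : (1-δ) * ustar (a (k+1)) ≤ (1-δ) * (m (a (k+1)) - ε) :=
        mul_le_mul_of_nonneg_left hu hδ1'.le
      have hc' : δ * c = (1 - δ) * ε := by
        rw [hcdef]; field_simp
      have h1 : δ * (m (a (k+1)) + c) ≤ δ *
          (((1 - a (k+1)) * m (a k) + (a (k+1) - a k) * m 1) / (1 - a k)) := by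
        linarith
      exact le_of_mul_le_mul_left h1 hδ0
    -- convergence of the infima
    have hbddA : BddAbove (Set.range a) := ⟨1, by rintro x ⟨k, rfl⟩; exact (haI k).2⟩
    have htend : Filter.Tendsto a Filter.atTop (nhds (⨆ k, a k)) :=
      tendsto_atTop_ciSup hamono hbddA
    set L := ⨆ k, a k with hLdef
    have hLI : L ∈ Set.Icc (0:ℝ) 1 :=
      ⟨le_trans (haI 0).1 (le_ciSup hbddA 0), ciSup_le fun k => (haI k).2⟩
    have htend1 : Filter.Tendsto (fun k => a (k+1)) Filter.atTop (nhds L) :=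
      htend.comp (Filter.tendsto_add_atTop_nat 1)
    have hma : Filter.Tendsto (fun k => m (a k)) Filter.atTop (nhds (m L)) := by
      have hcw : ContinuousWithinAt m (Set.Icc 0 1) L := hcont L hLI
      exact hcw.tendsto.comp (tendsto_nhdsWithin_of_tendsto_nhds_of_eventually_within a htend
        (Filter.Eventually.of_forall (fun k => haI k)))
    have hma1 : Filter.Tendsto (fun k => m (a (k+1))) Filter.atTop (nhds (m L)) :=
      hma.comp (Filter.tendsto_add_atTop_nat 1)
    rcases lt_or_eq_of_le hLI.2 with hL1 | hL1
    · -- case L < 1 : the chord value tends to m L, contradiction with the gap c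
      have hden : Filter.Tendsto (fun k => 1 - a k) Filter.atTop (nhds (1 - L)) :=
        tendsto_const_nhds.sub htend
      have hnum : Filter.Tendsto
          (fun k => (1 - a (k+1)) * m (a k) + (a (k+1) - a k) * m 1) Filter.atTop
          (nhds ((1 - L) * m L + (L - L) * m 1)) :=
        ((tendsto_const_nhds.sub htend1).mul hma).add ((htend1.sub htend).mul tendsto_const_nhds)
      have hU : Filter.Tendsto
          (fun k => ((1 - a (k+1)) * m (a k) + (a (k+1) - a k) * m 1) / (1 - a k))
          Filter.atTop (nhds (((1 - L) * m L + (L - L) * m 1) / (1 - L))) :=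
        hnum.div hden (by intro h; linarith [sub_eq_zero.mp h])
      have hUeq : ((1 - L) * m L + (L - L) * m 1) / (1 - L) = m L := by
        have : (1:ℝ) - L ≠ 0 := by intro h; linarith [sub_eq_zero.mp h]
        field_simp
        ring
      rw [hUeq] at hU
      have hge : m L + c ≤ m L :=
        le_of_tendsto_of_tendsto' (hma1.add tendsto_const_nhds) hU hkey
      linarith
    · -- case L = 1 : the chord value is squeezed between m(aₖ) and m(1)
      have hUle : ∀ k, ((1 - a (k+1)) * m (a k) + (a (k+1) - a k) * m 1) / (1 - a k)
          ≤ max (m (a k)) (m 1) := by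
        intro k
        have hw1 : 0 ≤ 1 - a (k+1) := by linarith [(haI (k+1)).2]
        have hw2 : 0 ≤ a (k+1) - a k := by linarith [hamono (Nat.le_succ k)]
        have hd : 0 < 1 - a k := by linarith [halt k]
        rw [div_le_iff₀ hd]
        have h1 : m (a k) ≤ max (m (a k)) (m 1) := le_max_left _ _
        have h2 : m 1 ≤ max (m (a k)) (m 1) := le_max_right _ _
        nlinarith [mul_le_mul_of_nonneg_left h1 hw1, mul_le_mul_of_nonneg_left h2 hw2]
      have h0 : Filter.Tendsto (fun k => max (m (a k)) (m 1) - m (a (k+1)))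
          Filter.atTop (nhds 0) := by
        have h : Filter.Tendsto (fun k => max (m (a k)) (m 1) - m (a (k+1)))
            Filter.atTop (nhds (max (m L) (m 1) - m L)) :=
          (hma.max (tendsto_const_nhds (x := m 1))).sub hma1
        rw [hL1] at h
        simpa using h
      have hcle : ∀ k : ℕ, c ≤ max (m (a k)) (m 1) - m (a (k+1)) :=
        fun k => by linarith [hkey k, hUle k]
      have hc0 : c ≤ (0:ℝ) := ge_of_tendsto' h0 hcle
      linarith
  -- extract the first empty stage
  have hQ0ne : (Qseq m ustar δ 0).Nonempty := ⟨0, by constructor <;> norm_num⟩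
  have hk0 : Qseq m ustar δ (Nat.find hstop) = ∅ := Nat.find_spec hstop
  have hk0pos : Nat.find hstop ≠ 0 := by
    intro h; rw [h] at hk0
    exact Set.nonempty_iff_ne_empty.mp hQ0ne hk0
  obtain ⟨j, hj⟩ := Nat.exists_eq_succ_of_ne_zero hk0pos
  have hjne : (Qseq m ustar δ j).Nonempty :=
    Set.nonempty_iff_ne_empty.mpr (Nat.find_min hstop (by omega))
  have hje : Qseq m ustar δ (j + 1) = ∅ := by
    rw [show j + 1 = Nat.find hstop from by omega]; exact hk0
  exact ⟨⟨j, hjne, hje⟩, Set.subset_eq_empty (Set.iInter_subset _ (j+1)) hje⟩
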